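/- arXiv:2405.19368 — 6 statements merged into one kernel-verified Lean document; each statement's English description precedes it below -/
import Mathlib

section
/- For any x > 0 and y > 0, the improper integral ∫₀¹ (-ln t)^(x-1) (-ln(1-t))^(y-1) dt converges (the integrand is integrable on (0,1)). -/
open Real Set intervalIntegral

open MeasureTheory

-- step 1: integrability of u^(x-1) * exp(-(y*u)) on Ioi 0
private lemma biG_step1 (x y : ℝ) (hx : 0 < x) (hy : 0 < y) :
    IntegrableOn (fun u : ℝ => u ^ (x - 1) * Real.exp (-(y * u))) (Ioi 0) := by
  have hg : IntegrableOn (fun v : ℝ => Real.exp (-v) * v ^ (x - 1)) (Ioi 0) :=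
    Real.GammaIntegral_convergent hx
  have h2 : IntegrableOn (fun u : ℝ => Real.exp (-(y * u)) * (y * u) ^ (x - 1)) (Ioi 0) := by
    have := (integrableOn_Ioi_comp_mul_left_iff
      (fun v : ℝ => Real.exp (-v) * v ^ (x - 1)) 0 hy).mpr (by simpa using hg)
    simpa using this
  have h3 := h2.const_mul ((y : ℝ) ^ (x - 1))⁻¹
  apply MeasureTheory.IntegrableOn.congr_fun h3 ?_ measurableSet_Ioi
  intro u hu
  have hu0 : (0 : ℝ) < u := hu
  have : (y * u) ^ (x - 1) = y ^ (x - 1) * u ^ (x - 1) :=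
    Real.mul_rpow hy.le hu0.le
  show (y ^ (x - 1))⁻¹ * (rexp (-(y * u)) * (y * u) ^ (x - 1)) = u ^ (x - 1) * rexp (-(y * u))
  rw [this]
  have hyx : (y : ℝ) ^ (x - 1) ≠ 0 := (Real.rpow_pos_of_pos hy _).ne'
  field_simp

private lemma biG_himg : (fun u : ℝ => Real.exp (-u)) '' Ioi (Real.log 2) = Ioo 0 (1/2 : ℝ) := by
  ext t
  simp only [mem_image, mem_Ioi, mem_Ioo]
  constructor
  · rintro ⟨u, hu, rfl⟩
    refine ⟨Real.exp_pos _, ?_⟩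
    have : Real.exp (-u) < Real.exp (-(Real.log 2)) := Real.exp_lt_exp.mpr (by linarith)
    rwa [Real.exp_neg (Real.log 2), Real.exp_log two_pos, show ((2:ℝ))⁻¹ = 1/2 by norm_num] at this
  · rintro ⟨ht0, ht⟩
    refine ⟨-Real.log t, ?_, by rw [neg_neg, Real.exp_log ht0]⟩
    have h1 : Real.log t < Real.log (1/2) := Real.log_lt_log ht0 ht
    have h2 : Real.log ((1:ℝ)/2) = -Real.log 2 := by
      rw [one_div, Real.log_inv]
    linarith

private lemma biG_step2 (x y : ℝ) (hx : 0 < x) (hy : 0 < y) :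
    IntegrableOn (fun t : ℝ => (-Real.log t) ^ (x - 1) * t ^ (y - 1)) (Ioo 0 (1/2)) := by
  rw [← biG_himg]
  have hderiv : ∀ u ∈ Ioi (Real.log 2),
      HasDerivWithinAt (fun u : ℝ => Real.exp (-u)) (-Real.exp (-u)) (Ioi (Real.log 2)) u := by
    intro u _
    exact (((Real.hasDerivAt_exp (-u)).comp u (hasDerivAt_neg u)).hasDerivWithinAt).congr_deriv (by ring)
  have hinj : InjOn (fun u : ℝ => Real.exp (-u)) (Ioi (Real.log 2)) :=
    (Real.exp_injective.comp neg_injective).injOn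
  rw [integrableOn_image_iff_integrableOn_abs_deriv_smul measurableSet_Ioi hderiv hinj]
  have key := (biG_step1 x y hx hy).mono_set (Ioi_subset_Ioi (Real.log_nonneg one_le_two))
  refine MeasureTheory.IntegrableOn.congr_fun key ?_ measurableSet_Ioi
  intro u hu
  show u ^ (x-1) * Real.exp (-(y*u)) =
    |(-Real.exp (-u))| • ((-Real.log (Real.exp (-u))) ^ (x - 1) * (Real.exp (-u)) ^ (y - 1))
  rw [abs_neg, abs_of_pos (Real.exp_pos _), Real.log_exp, neg_neg, smul_eq_mul,
    Real.rpow_def_of_pos (Real.exp_pos _), Real.log_exp]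
  rw [show -(y*u) = -u*(y-1) + -u from by ring, Real.exp_add]
  ring

private lemma biG_step3 (x y : ℝ) (hx : 0 < x) (hy : 0 < y) :
    IntegrableOn (fun t : ℝ => (-Real.log t) ^ (x - 1) * (-Real.log (1 - t)) ^ (y - 1))
      (Ioo 0 (1/2)) := by
  set C : ℝ := max 1 (2 ^ (y - 1)) with hC
  have hC1 : (1:ℝ) ≤ C := le_max_left _ _
  have hmeas : MeasureTheory.AEStronglyMeasurable
      (fun t : ℝ => (-Real.log t) ^ (x - 1) * (-Real.log (1 - t)) ^ (y - 1))
      (MeasureTheory.volume.restrict (Ioo 0 (1/2))) := by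
    apply Measurable.aestronglyMeasurable
    exact (Real.measurable_log.neg.pow_const _).mul
      ((Real.measurable_log.comp (measurable_const.sub measurable_id)).neg.pow_const _)
  apply MeasureTheory.Integrable.mono' ((biG_step2 x y hx hy).const_mul C) hmeas
  rw [MeasureTheory.ae_restrict_iff' measurableSet_Ioo]
  refine MeasureTheory.ae_of_all _ fun t ht => ?_
  obtain ⟨ht0, ht2⟩ := ht
  have h1t : (0:ℝ) < 1 - t := by linarith
  have l1 : 0 < -Real.log t := by
    have := Real.log_neg ht0 (by linarith : t < 1); linarith
  have l2 : t ≤ -Real.log (1 - t) := by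
    have := Real.log_le_sub_one_of_pos h1t; linarith
  have l3 : -Real.log (1 - t) ≤ 2 * t := by
    have h := Real.log_le_sub_one_of_pos (inv_pos.mpr h1t)
    rw [Real.log_inv] at h
    have hinv : (1 - t)⁻¹ ≤ 2 := by
      rw [show (2:ℝ) = (1/2:ℝ)⁻¹ by norm_num]
      exact inv_anti₀ (by norm_num) (by linarith)
    have e : (1 - t)⁻¹ - 1 = t * (1 - t)⁻¹ := by field_simp; ring
    have : t * (1 - t)⁻¹ ≤ t * 2 := mul_le_mul_of_nonneg_left hinv ht0.le
    linarith
  have hl0 : 0 ≤ -Real.log (1 - t) := le_trans ht0.le l2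
  have bnd2 : (-Real.log (1 - t)) ^ (y - 1) ≤ C * t ^ (y - 1) := by
    rcases le_or_gt 1 y with hy1 | hy1
    · have h1 : (-Real.log (1 - t)) ^ (y - 1) ≤ (2 * t) ^ (y - 1) :=
        Real.rpow_le_rpow hl0 l3 (by linarith)
      have h2 : (2 * t) ^ (y - 1) = 2 ^ (y - 1) * t ^ (y - 1) :=
        Real.mul_rpow (by norm_num) ht0.le
      have h3 : 2 ^ (y - 1) * t ^ (y - 1) ≤ C * t ^ (y - 1) :=
        mul_le_mul_of_nonneg_right (le_max_right _ _) (Real.rpow_nonneg ht0.le _)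
      linarith [h1, h2 ▸ h1]
    · have h1 : (-Real.log (1 - t)) ^ (y - 1) ≤ t ^ (y - 1) :=
        Real.rpow_le_rpow_of_nonpos ht0 l2 (by linarith)
      have h2 : t ^ (y - 1) ≤ C * t ^ (y - 1) :=
        le_mul_of_one_le_left (Real.rpow_nonneg ht0.le _) hC1
      linarith
  have hfn : 0 ≤ (-Real.log t) ^ (x - 1) * (-Real.log (1 - t)) ^ (y - 1) :=
    mul_nonneg (Real.rpow_nonneg l1.le _) (Real.rpow_nonneg hl0 _)
  rw [Real.norm_eq_abs, abs_of_nonneg hfn]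
  calc (-Real.log t) ^ (x - 1) * (-Real.log (1 - t)) ^ (y - 1)
      ≤ (-Real.log t) ^ (x - 1) * (C * t ^ (y - 1)) :=
        mul_le_mul_of_nonneg_left bnd2 (Real.rpow_nonneg l1.le _)
    _ = C * ((-Real.log t) ^ (x - 1) * t ^ (y - 1)) := by ring

noncomputable def biGamma (x y : ℝ) : ℝ :=
  ∫ t in (0:ℝ)..1, (-Real.log t) ^ (x - 1) * (-Real.log (1 - t)) ^ (y - 1)

theorem biGamma_integrable (x y : ℝ) (hx : 0 < x) (hy : 0 < y) :
    MeasureTheory.IntegrableOn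
      (fun t : ℝ => (-Real.log t) ^ (x - 1) * (-Real.log (1 - t)) ^ (y - 1))
      (Set.Ioo 0 1) := by
  have A := biG_step3 x y hx hy
  have B := biG_step3 y x hy hx
  have piece2 : MeasureTheory.IntegrableOn
      (fun t : ℝ => (-Real.log t) ^ (x - 1) * (-Real.log (1 - t)) ^ (y - 1))
      (Ioo (1/2) 1) := by
    have himg2 : (fun u : ℝ => 1 - u) '' Ioo (0:ℝ) (1/2) = Ioo (1/2) 1 := by
      rw [Set.image_const_sub_Ioo]; norm_num
    rw [← himg2]
    have hderiv2 : ∀ u ∈ Ioo (0:ℝ) (1/2),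
        HasDerivWithinAt (fun u : ℝ => 1 - u) (-1) (Ioo (0:ℝ) (1/2)) u :=
      fun u _ => ((hasDerivAt_id u).const_sub 1).hasDerivWithinAt
    have hinj2 : InjOn (fun u : ℝ => 1 - u) (Ioo (0:ℝ) (1/2)) :=
      fun a _ b _ h => by simpa using sub_right_injective h
    rw [MeasureTheory.integrableOn_image_iff_integrableOn_abs_deriv_smul
      measurableSet_Ioo hderiv2 hinj2]
    refine MeasureTheory.IntegrableOn.congr_fun B ?_ measurableSet_Ioo
    intro u _
    show (-Real.log u) ^ (y-1) * (-Real.log (1-u)) ^ (x-1) =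
      |(-1 : ℝ)| • ((-Real.log (1-u)) ^ (x - 1) * (-Real.log (1 - (1-u))) ^ (y - 1))
    simp only [abs_neg, abs_one, one_smul, sub_sub_cancel]
    ring
  have h1 : MeasureTheory.IntegrableOn
      (fun t : ℝ => (-Real.log t) ^ (x - 1) * (-Real.log (1 - t)) ^ (y - 1))
      (Ioc 0 (1/2)) := (integrableOn_Ioc_iff_integrableOn_Ioo enorm_ne_top).mpr A
  have := h1.union piece2
  rwa [Set.Ioc_union_Ioo_eq_Ioo (by norm_num : (0:ℝ) ≤ 1/2) (by norm_num : (1/2:ℝ) < 1)] at this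
end

section
/- If x ≥ 1 and y ≥ 1, then Γ(x,y) ≥ max(Γ(x)/y^x, Γ(y)/x^y). -/
open Real Set intervalIntegral MeasureTheory

lemma image_exp_neg : (fun u : ℝ => Real.exp (-u)) '' (Ioi 0) = Ioo 0 1 := by
  ext t
  constructor
  · rintro ⟨u, hu, rfl⟩
    refine ⟨Real.exp_pos _, ?_⟩
    rw [← Real.exp_zero]
    exact Real.exp_lt_exp.mpr (by simpa using hu)
  · rintro ⟨h0, h1⟩
    refine ⟨-Real.log t, by simpa using Real.log_neg h0 h1, ?_⟩
    show Real.exp (-(-Real.log t)) = t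
    rw [neg_neg, Real.exp_log h0]

lemma hasDeriv_exp_neg : ∀ u ∈ Ioi (0:ℝ),
    HasDerivWithinAt (fun u : ℝ => Real.exp (-u)) (-Real.exp (-u)) (Ioi 0) u := by
  intro u _
  simpa [Function.comp_def] using ((Real.hasDerivAt_exp (-u)).comp u (hasDerivAt_neg u)).hasDerivWithinAt

lemma injOn_exp_neg : InjOn (fun u : ℝ => Real.exp (-u)) (Ioi 0) :=
  fun _ _ _ _ h => neg_injective (Real.exp_injective h)

lemma transfer_eq (g : ℝ → ℝ) :
    (∫ t in Ioo (0:ℝ) 1, g t) = ∫ u in Ioi (0:ℝ), Real.exp (-u) * g (Real.exp (-u)) := by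
  rw [← image_exp_neg,
    integral_image_eq_integral_abs_deriv_smul measurableSet_Ioi hasDeriv_exp_neg injOn_exp_neg g]
  simp [abs_of_pos (Real.exp_pos _), smul_eq_mul]

lemma transfer_int (g : ℝ → ℝ) :
    IntegrableOn g (Ioo (0:ℝ) 1) ↔
      IntegrableOn (fun u => Real.exp (-u) * g (Real.exp (-u))) (Ioi 0) := by
  rw [← image_exp_neg,
    integrableOn_image_iff_integrableOn_abs_deriv_smul measurableSet_Ioi hasDeriv_exp_neg
      injOn_exp_neg g]
  refine integrableOn_congr_fun (fun u _ => ?_) measurableSet_Ioi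
  simp [abs_of_pos (Real.exp_pos _), smul_eq_mul]

lemma transformed_fun (x y : ℝ) :
    (fun u : ℝ => Real.exp (-u) * ((-Real.log (Real.exp (-u))) ^ (x-1) * (Real.exp (-u)) ^ (y-1)))
      = fun u : ℝ => u ^ (x-1) * Real.exp (-(y * u)) := by
  funext u
  rw [Real.log_exp, neg_neg, Real.rpow_def_of_pos (Real.exp_pos _), Real.log_exp]
  rw [show Real.exp (-u) * (u ^ (x-1) * Real.exp (-u * (y-1)))
      = u ^ (x-1) * (Real.exp (-u) * Real.exp (-u * (y-1))) by ring, ← Real.exp_add]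
  ring_nf

lemma key_integrable (x y : ℝ) (hx : 0 < x) (hy : 0 < y) :
    IntegrableOn (fun t => (-Real.log t) ^ (x-1) * t ^ (y-1)) (Ioo (0:ℝ) 1) := by
  rw [transfer_int, transformed_fun x y]
  have := integrableOn_rpow_mul_exp_neg_mul_rpow (by linarith : (-1:ℝ) < x - 1) one_pos hy
  refine this.congr_fun (fun u _ => ?_) measurableSet_Ioi
  beta_reduce
  rw [Real.rpow_one, neg_mul]

lemma key_eq (x y : ℝ) (hx : 0 < x) (hy : 0 < y) :
    (∫ t in Ioo (0:ℝ) 1, (-Real.log t) ^ (x-1) * t ^ (y-1)) = Real.Gamma x / y ^ x := by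
  rw [transfer_eq, transformed_fun x y, Real.integral_rpow_mul_exp_neg_mul_Ioi hx hy,
    one_div, Real.inv_rpow hy.le, inv_mul_eq_div]

lemma integrableOn_reflect {g : ℝ → ℝ} (hg : IntegrableOn g (Ioo (0:ℝ) 1)) :
    IntegrableOn (fun t => g (1 - t)) (Ioo (0:ℝ) 1) := by
  have himg : (fun t : ℝ => 1 - t) '' (Ioo 0 1) = Ioo 0 1 := by
    rw [Set.image_const_sub_Ioo]; norm_num
  have h := (integrableOn_image_iff_integrableOn_abs_deriv_smul (s := Ioo (0:ℝ) 1) measurableSet_Ioo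
    (f := fun t : ℝ => 1 - t) (f' := fun _ => (-1 : ℝ))
    (fun t _ => by simpa using ((hasDerivAt_id t).const_sub (1:ℝ)).hasDerivWithinAt)
    (fun a _ b _ h => by simpa using h) g)
  rw [himg] at h
  have h2 := h.mp hg
  refine h2.congr_fun (fun t _ => ?_) measurableSet_Ioo
  simp

lemma integrable_neg_log_rpow (s : ℝ) (hs : -1 < s) :
    IntegrableOn (fun t => (-Real.log t) ^ s) (Ioo (0:ℝ) 1) := by
  have h := key_integrable (s + 1) 1 (by linarith) one_pos
  simp only [add_sub_cancel_right, sub_self, Real.rpow_zero, mul_one] at h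
  exact h

lemma biGamma_integrand_integrable (x y : ℝ) (hx : 1 ≤ x) (hy : 1 ≤ y) :
    IntegrableOn (fun t => (-Real.log t) ^ (x-1) * (-Real.log (1-t)) ^ (y-1)) (Ioo (0:ℝ) 1) := by
  have hi1 : IntegrableOn (fun t => (-Real.log t) ^ (x + y - 2)) (Ioo (0:ℝ) 1) :=
    integrable_neg_log_rpow _ (by linarith)
  have hi2 : IntegrableOn (fun t => (-Real.log (1-t)) ^ (x + y - 2)) (Ioo (0:ℝ) 1) :=
    integrableOn_reflect (g := fun u => (-Real.log u) ^ (x + y - 2)) hi1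
  have hmeas : AEStronglyMeasurable
      (fun t => (-Real.log t) ^ (x-1) * (-Real.log (1-t)) ^ (y-1))
      (volume.restrict (Ioo (0:ℝ) 1)) := by
    have hc1 : Continuous fun z : ℝ => z ^ (x-1) :=
      continuous_iff_continuousAt.mpr fun z => Real.continuousAt_rpow_const z _ (Or.inr (by linarith))
    have hc2 : Continuous fun z : ℝ => z ^ (y-1) :=
      continuous_iff_continuousAt.mpr fun z => Real.continuousAt_rpow_const z _ (Or.inr (by linarith))
    exact ((hc1.measurable.comp Real.measurable_log.neg).mul
      (hc2.measurable.comp ((Real.measurable_log.comp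
        (measurable_const.sub measurable_id)).neg))).aestronglyMeasurable
  refine (hi1.add hi2).mono' hmeas ?_
  rw [ae_restrict_iff' measurableSet_Ioo]
  refine ae_of_all _ (fun t ht => ?_)
  have ha : 0 < -Real.log t := by
    have := Real.log_neg ht.1 ht.2
    linarith
  have hb : 0 ≤ -Real.log (1 - t) := by
    have h1 : (0:ℝ) ≤ 1 - t := by linarith [ht.2]
    have h2 : (1:ℝ) - t ≤ 1 := by linarith [ht.1]
    have := Real.log_nonpos h1 h2
    linarith
  set a := -Real.log t with hadef
  set b := -Real.log (1 - t) with hbdef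
  have hmax : 0 < max a b := lt_max_of_lt_left ha
  have h1 : a ^ (x-1) * b ^ (y-1) ≤ (max a b) ^ (x-1) * (max a b) ^ (y-1) :=
    mul_le_mul (Real.rpow_le_rpow ha.le (le_max_left _ _) (by linarith))
      (Real.rpow_le_rpow hb (le_max_right _ _) (by linarith))
      (Real.rpow_nonneg hb _) (Real.rpow_nonneg hmax.le _)
  have h2 : (max a b) ^ (x-1) * (max a b) ^ (y-1) = (max a b) ^ (x + y - 2) := by
    rw [← Real.rpow_add hmax]
    ring_nf
  have h3 : (max a b) ^ (x + y - 2) ≤ a ^ (x + y - 2) + b ^ (x + y - 2) := by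
    rcases le_total a b with hab | hab
    · rw [max_eq_right hab]
      exact le_add_of_nonneg_left (Real.rpow_nonneg ha.le _)
    · rw [max_eq_left hab]
      exact le_add_of_nonneg_right (Real.rpow_nonneg hb _)
  have hnorm : ‖a ^ (x-1) * b ^ (y-1)‖ = a ^ (x-1) * b ^ (y-1) :=
    Real.norm_of_nonneg (mul_nonneg (Real.rpow_nonneg ha.le _) (Real.rpow_nonneg hb _))
  calc ‖a ^ (x-1) * b ^ (y-1)‖ = a ^ (x-1) * b ^ (y-1) := hnorm
    _ ≤ (max a b) ^ (x + y - 2) := h2 ▸ h1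
    _ ≤ a ^ (x + y - 2) + b ^ (x + y - 2) := h3

lemma half_bound (x y : ℝ) (hx : 1 ≤ x) (hy : 1 ≤ y) :
    Real.Gamma x / y ^ x ≤ biGamma x y := by
  have h0x : (0:ℝ) < x := lt_of_lt_of_le one_pos hx
  have h0y : (0:ℝ) < y := lt_of_lt_of_le one_pos hy
  have hg := key_integrable x y h0x h0y
  have hh := biGamma_integrand_integrable x y hx hy
  have hmono : (∫ t in Ioo (0:ℝ) 1, (-Real.log t) ^ (x-1) * t ^ (y-1))
      ≤ ∫ t in Ioo (0:ℝ) 1, (-Real.log t) ^ (x-1) * (-Real.log (1-t)) ^ (y-1) := by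
    refine setIntegral_mono_on hg hh measurableSet_Ioo (fun t ht => ?_)
    have h1t : 0 < 1 - t := by linarith [ht.2]
    have hlt : t ≤ -Real.log (1 - t) := by
      have := Real.log_le_sub_one_of_pos h1t
      linarith
    have ha : 0 ≤ -Real.log t := by
      have := Real.log_nonpos ht.1.le (by linarith [ht.2])
      linarith
    exact mul_le_mul_of_nonneg_left (Real.rpow_le_rpow ht.1.le hlt (by linarith))
      (Real.rpow_nonneg ha _)
  calc Real.Gamma x / y ^ x
      = ∫ t in Ioo (0:ℝ) 1, (-Real.log t) ^ (x-1) * t ^ (y-1) := (key_eq x y h0x h0y).symm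
    _ ≤ ∫ t in Ioo (0:ℝ) 1, (-Real.log t) ^ (x-1) * (-Real.log (1-t)) ^ (y-1) := hmono
    _ = biGamma x y := by
        rw [biGamma, intervalIntegral.integral_of_le zero_le_one,
          MeasureTheory.integral_Ioc_eq_integral_Ioo]

lemma biGamma_symm (x y : ℝ) : biGamma x y = biGamma y x := by
  have h := intervalIntegral.integral_comp_sub_left (a := (0:ℝ)) (b := 1)
    (fun t => (-Real.log t) ^ (y-1) * (-Real.log (1-t)) ^ (x-1)) 1
  simp only [sub_sub_cancel, sub_self, sub_zero] at h
  unfold biGamma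
  rw [intervalIntegral.integral_congr
    (g := fun t => (-Real.log (1-t)) ^ (y-1) * (-Real.log t) ^ (x-1))
    (fun t _ => mul_comm _ _), h]

theorem biGamma_ge_max (x y : ℝ) (hx : 1 ≤ x) (hy : 1 ≤ y) :
    max (Real.Gamma x / y ^ x) (Real.Gamma y / x ^ y) ≤ biGamma x y := by
  refine max_le (half_bound x y hx hy) ?_
  rw [biGamma_symm x y]
  exact half_bound y x hy hx
end

section
/- If x ≥ 1 and 0 < y ≤ 1, then Γ(y)/x^y ≤ Γ(x,y) ≤ Γ(x)/y^x. -/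
open Real Set intervalIntegral

open MeasureTheory

lemma expNeg_image : (fun u : ℝ => Real.exp (-u)) '' Ioi 0 = Ioo (0:ℝ) 1 := by
  ext t
  constructor
  · rintro ⟨u, hu, rfl⟩
    exact ⟨Real.exp_pos _, Real.exp_lt_one_iff.mpr (by simpa using hu)⟩
  · rintro ⟨ht0, ht1⟩
    exact ⟨-Real.log t, by simpa using Real.log_neg ht0 ht1, by simp [Real.exp_log ht0]⟩

lemma expNeg_hasDeriv (u : ℝ) :
    HasDerivAt (fun u : ℝ => Real.exp (-u)) (-Real.exp (-u)) u := by
  simpa using (hasDerivAt_neg u).exp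

lemma aux_eq (u p q : ℝ) :
    |(-Real.exp (-u))| • (Real.exp (-u) ^ (p - 1) * (-Real.log (Real.exp (-u))) ^ (q - 1))
      = u ^ (q - 1) * Real.exp (-(p * u)) := by
  rw [abs_neg, abs_of_pos (Real.exp_pos _), Real.log_exp, neg_neg, smul_eq_mul,
    Real.rpow_def_of_pos (Real.exp_pos _), Real.log_exp]
  rw [show Real.exp (-u) * (Real.exp (-u * (p - 1)) * u ^ (q - 1))
      = u ^ (q - 1) * (Real.exp (-u) * Real.exp (-u * (p - 1))) by ring,
    ← Real.exp_add]
  ring_nf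

lemma aux_integrable (p q : ℝ) (hp : 0 < p) (hq : 0 < q) :
    IntegrableOn (fun u : ℝ => u ^ (q - 1) * Real.exp (-(p * u))) (Ioi 0) := by
  have := integrableOn_rpow_mul_exp_neg_mul_rpow (p := 1) (s := q - 1) (b := p)
    (by linarith) zero_lt_one hp
  simpa [Real.rpow_one, neg_mul] using this

lemma aux_key (p q : ℝ) (hp : 0 < p) (hq : 0 < q) :
    (∫ t in Ioo (0:ℝ) 1, t ^ (p - 1) * (-Real.log t) ^ (q - 1) = Real.Gamma q / p ^ q)
      ∧ IntegrableOn (fun t : ℝ => t ^ (p - 1) * (-Real.log t) ^ (q - 1)) (Ioo 0 1) := by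
  have hderiv : ∀ u ∈ Ioi (0:ℝ), HasDerivWithinAt (fun u : ℝ => Real.exp (-u))
      (-Real.exp (-u)) (Ioi 0) u := fun u _ => (expNeg_hasDeriv u).hasDerivWithinAt
  have hinj : InjOn (fun u : ℝ => Real.exp (-u)) (Ioi 0) := fun a _ b _ h =>
    neg_injective (Real.exp_injective h)
  have himg := expNeg_image
  constructor
  · rw [← himg, MeasureTheory.integral_image_eq_integral_abs_deriv_smul measurableSet_Ioi
      hderiv hinj]
    rw [show (fun u : ℝ => |(-Real.exp (-u))| •
        (Real.exp (-u) ^ (p - 1) * (-Real.log (Real.exp (-u))) ^ (q - 1)))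
        = fun u : ℝ => u ^ (q - 1) * Real.exp (-(p * u)) from funext fun u => aux_eq u p q]
    rw [Real.integral_rpow_mul_exp_neg_mul_Ioi hq hp]
    rw [Real.div_rpow zero_le_one hp.le, Real.one_rpow]
    ring
  · rw [← himg,
      MeasureTheory.integrableOn_image_iff_integrableOn_abs_deriv_smul measurableSet_Ioi
      hderiv hinj]
    rw [show (fun u : ℝ => |(-Real.exp (-u))| •
        (Real.exp (-u) ^ (p - 1) * (-Real.log (Real.exp (-u))) ^ (q - 1)))
        = fun u : ℝ => u ^ (q - 1) * Real.exp (-(p * u)) from funext fun u => aux_eq u p q]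
    exact aux_integrable p q hp hq

lemma oneSub_image : (fun u : ℝ => 1 - u) '' Ioo (0:ℝ) 1 = Ioo (0:ℝ) 1 := by
  ext t
  simp only [mem_image, mem_Ioo]
  constructor
  · rintro ⟨u, ⟨h1, h2⟩, rfl⟩
    exact ⟨by show (0:ℝ) < 1 - u; linarith, by show (1:ℝ) - u < 1; linarith⟩
  · rintro ⟨h1, h2⟩
    exact ⟨1 - t, ⟨by linarith, by linarith⟩, by show 1 - (1 - t) = t; ring⟩

lemma aux_key' (p q : ℝ) (hp : 0 < p) (hq : 0 < q) :
    (∫ t in Ioo (0:ℝ) 1, (1 - t) ^ (p - 1) * (-Real.log (1 - t)) ^ (q - 1)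
        = Real.Gamma q / p ^ q)
      ∧ IntegrableOn (fun t : ℝ => (1 - t) ^ (p - 1) * (-Real.log (1 - t)) ^ (q - 1))
        (Ioo 0 1) := by
  have hderiv : ∀ u ∈ Ioo (0:ℝ) 1, HasDerivWithinAt (fun u : ℝ => 1 - u)
      (-1 : ℝ) (Ioo 0 1) u := fun u _ => by
    simpa using ((hasDerivAt_id u).const_sub 1).hasDerivWithinAt
  have hinj : InjOn (fun u : ℝ => 1 - u) (Ioo (0:ℝ) 1) := fun a _ b _ h => by
    have h' : 1 - a = 1 - b := h
    linarith
  have base := aux_key p q hp hq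
  constructor
  · have := MeasureTheory.integral_image_eq_integral_abs_deriv_smul measurableSet_Ioo
      hderiv hinj (fun t : ℝ => t ^ (p - 1) * (-Real.log t) ^ (q - 1))
    rw [oneSub_image] at this
    rw [← base.1, this]
    simp
  · have := (MeasureTheory.integrableOn_image_iff_integrableOn_abs_deriv_smul
      measurableSet_Ioo hderiv hinj
      (fun t : ℝ => t ^ (p - 1) * (-Real.log t) ^ (q - 1))).symm
    rw [oneSub_image] at this
    have h2 := this.mpr base.2
    simpa using h2

theorem biGamma_between (x y : ℝ) (hx : 1 ≤ x) (hy0 : 0 < y) (hy1 : y ≤ 1) :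
    Real.Gamma y / x ^ y ≤ biGamma x y ∧ biGamma x y ≤ Real.Gamma x / y ^ x := by
  have hx0 : (0:ℝ) < x := lt_of_lt_of_le one_pos hx
  -- rewrite biGamma as an integral over Ioo 0 1
  have hbi : biGamma x y
      = ∫ t in Ioo (0:ℝ) 1, (-Real.log t) ^ (x - 1) * (-Real.log (1 - t)) ^ (y - 1) := by
    rw [biGamma, intervalIntegral.integral_of_le zero_le_one,
      MeasureTheory.integral_Ioc_eq_integral_Ioo]
  set f : ℝ → ℝ := fun t => (-Real.log t) ^ (x - 1) * (-Real.log (1 - t)) ^ (y - 1) with hf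
  set h : ℝ → ℝ := fun t => t ^ (y - 1) * (-Real.log t) ^ (x - 1) with hh
  set g : ℝ → ℝ := fun t => (1 - t) ^ (x - 1) * (-Real.log (1 - t)) ^ (y - 1) with hg
  obtain ⟨hval, hint⟩ := aux_key y x hy0 hx0
  obtain ⟨gval, gint⟩ := aux_key' x y hx0 hy0
  -- pointwise inequalities on Ioo 0 1
  have hgf : ∀ t ∈ Ioo (0:ℝ) 1, g t ≤ f t := by
    rintro t ⟨ht0, ht1⟩
    have h1t : (0:ℝ) < 1 - t := by linarith
    have hlog : 1 - t ≤ -Real.log t := by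
      have := Real.log_le_sub_one_of_pos ht0; linarith
    have hA : (1 - t) ^ (x - 1) ≤ (-Real.log t) ^ (x - 1) :=
      Real.rpow_le_rpow h1t.le hlog (by linarith)
    have hB : (0:ℝ) ≤ (-Real.log (1 - t)) ^ (y - 1) := by
      apply Real.rpow_nonneg
      have : Real.log (1 - t) ≤ 0 := Real.log_nonpos h1t.le (by linarith)
      linarith
    exact mul_le_mul_of_nonneg_right hA hB
  have hfh : ∀ t ∈ Ioo (0:ℝ) 1, f t ≤ h t := by
    rintro t ⟨ht0, ht1⟩
    have h1t : (0:ℝ) < 1 - t := by linarith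
    have hlog : t ≤ -Real.log (1 - t) := by
      have := Real.log_le_sub_one_of_pos h1t; linarith
    have hA : (-Real.log (1 - t)) ^ (y - 1) ≤ t ^ (y - 1) :=
      Real.rpow_le_rpow_of_nonpos ht0 hlog (by linarith)
    have hB : (0:ℝ) ≤ (-Real.log t) ^ (x - 1) := by
      apply Real.rpow_nonneg
      have : Real.log t ≤ 0 := Real.log_nonpos ht0.le ht1.le
      linarith
    calc f t = (-Real.log (1 - t)) ^ (y - 1) * (-Real.log t) ^ (x - 1) := by
          rw [hf]; ring
      _ ≤ t ^ (y - 1) * (-Real.log t) ^ (x - 1) := mul_le_mul_of_nonneg_right hA hB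
      _ = h t := rfl
  -- integrability of f
  have hfmeas : AEStronglyMeasurable f (volume.restrict (Ioo (0:ℝ) 1)) := by
    apply Measurable.aestronglyMeasurable
    exact (Real.measurable_log.neg.pow_const _).mul
      (((Real.measurable_log.comp (measurable_const.sub measurable_id)).neg).pow_const _)
  have hfnonneg : ∀ t ∈ Ioo (0:ℝ) 1, 0 ≤ f t := by
    rintro t ⟨ht0, ht1⟩
    have h1t : (0:ℝ) < 1 - t := by linarith
    apply mul_nonneg <;> apply Real.rpow_nonneg
    · have := Real.log_nonpos ht0.le ht1.le; linarith
    · have := Real.log_nonpos h1t.le (by linarith : 1 - t ≤ 1); linarith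
  have hfint : IntegrableOn f (Ioo (0:ℝ) 1) := by
    refine hint.mono' hfmeas ?_
    rw [MeasureTheory.ae_restrict_iff' measurableSet_Ioo]
    filter_upwards with t ht
    have hhnn : 0 ≤ h t := mul_nonneg (Real.rpow_nonneg ht.1.le _)
      (Real.rpow_nonneg (by have := Real.log_nonpos ht.1.le ht.2.le; linarith) _)
    rw [Real.norm_eq_abs, abs_of_nonneg (hfnonneg t ht)]
    exact hfh t ht
  constructor
  · rw [hbi, ← gval]
    exact MeasureTheory.setIntegral_mono_on gint hfint measurableSet_Ioo hgf
  · rw [hbi, ← hval]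
    exact MeasureTheory.setIntegral_mono_on hfint hint measurableSet_Ioo hfh
end

section
/- For any x ≥ 1 and y ≥ 1, Γ(x,y) ≥ B(x,y), where B is the Euler beta function; the inequality is reversed if 0 < x ≤ 1 and 0 < y ≤ 1. -/
open Real Set intervalIntegral

noncomputable def betaReal (x y : ℝ) : ℝ :=
  ∫ t in (0:ℝ)..1, t ^ (x - 1) * (1 - t) ^ (y - 1)

namespace BiGammaAux

open MeasureTheory

lemma log_bound {t a : ℝ} (ht0 : 0 < t) (ha : 0 < a) :
    -Real.log t ≤ a⁻¹ * t ^ (-a) := by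
  have h1 : Real.log (t ^ (-a)) ≤ t ^ (-a) - 1 :=
    Real.log_le_sub_one_of_pos (Real.rpow_pos_of_pos ht0 _)
  rw [Real.log_rpow ht0] at h1
  rw [inv_mul_eq_div, le_div_iff₀ ha]
  nlinarith [Real.rpow_pos_of_pos ht0 (-a)]

lemma beta_half {x : ℝ} (hx : 0 < x) (y : ℝ) :
    IntervalIntegrable (fun t : ℝ => t ^ (x - 1) * (1 - t) ^ (y - 1)) volume 0 2⁻¹ := by
  have hbase : IntervalIntegrable
      (fun t : ℝ => max ((2:ℝ)⁻¹ ^ (y - 1)) 1 * t ^ (x - 1)) volume 0 2⁻¹ :=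
    (intervalIntegral.intervalIntegrable_rpow' (by linarith)).const_mul _
  rw [intervalIntegrable_iff_integrableOn_Ioc_of_le (by norm_num)] at hbase ⊢
  refine MeasureTheory.Integrable.mono hbase (Measurable.aestronglyMeasurable (by fun_prop)) ?_
  refine (ae_restrict_iff' measurableSet_Ioc).mpr (ae_of_all _ fun t ht => ?_)
  obtain ⟨ht0, ht1⟩ := ht
  have h1t : (2:ℝ)⁻¹ ≤ 1 - t := by linarith
  have hC : (1 - t) ^ (y - 1) ≤ max ((2:ℝ)⁻¹ ^ (y - 1)) 1 := by
    rcases le_total y 1 with h | h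
    · exact le_max_of_le_left (Real.rpow_le_rpow_of_nonpos (by norm_num) h1t (by linarith))
    · exact le_max_of_le_right (Real.rpow_le_one (by linarith) (by linarith) (by linarith))
  have h0 : (0:ℝ) ≤ t ^ (x - 1) := Real.rpow_nonneg ht0.le _
  have h0' : (0:ℝ) ≤ (1 - t) ^ (y - 1) := Real.rpow_nonneg (by linarith) _
  rw [Real.norm_eq_abs, Real.norm_eq_abs, abs_of_nonneg (mul_nonneg h0 h0'),
    abs_of_nonneg (mul_nonneg (le_max_of_le_right zero_le_one) h0)]
  calc t ^ (x - 1) * (1 - t) ^ (y - 1) ≤ t ^ (x - 1) * max ((2:ℝ)⁻¹ ^ (y - 1)) 1 :=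
        mul_le_mul_of_nonneg_left hC h0
    _ = _ := mul_comm _ _

lemma beta_int {x y : ℝ} (hx : 0 < x) (hy : 0 < y) :
    IntervalIntegrable (fun t : ℝ => t ^ (x - 1) * (1 - t) ^ (y - 1)) volume 0 1 := by
  refine (beta_half hx y).trans ?_
  have h2 : IntervalIntegrable (fun t : ℝ => (1 - t) ^ (y - 1) * (1 - (1 - t)) ^ (x - 1))
      volume (1 - 0) (1 - 2⁻¹) := (beta_half hy x).comp_sub_left 1
  have h3 : (fun t : ℝ => (1 - t) ^ (y - 1) * (1 - (1 - t)) ^ (x - 1))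
      = fun t : ℝ => t ^ (x - 1) * (1 - t) ^ (y - 1) := by
    funext t; rw [sub_sub_cancel, mul_comm]
  have e1 : (1:ℝ) - 0 = 1 := by norm_num
  have e2 : (1:ℝ) - 2⁻¹ = 2⁻¹ := by norm_num
  rw [h3, e1, e2] at h2
  exact h2.symm

lemma betaReal_symm_aux (x y : ℝ) :
    (∫ t in (0:ℝ)..1, t ^ (x - 1) * (1 - t) ^ (y - 1))
      = ∫ t in (0:ℝ)..1, t ^ (y - 1) * (1 - t) ^ (x - 1) := by
  have h := intervalIntegral.integral_comp_sub_left (a := (0:ℝ)) (b := 1)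
    (fun t : ℝ => t ^ (y - 1) * (1 - t) ^ (x - 1)) 1
  simp only [sub_sub_cancel, sub_zero, sub_self] at h
  rw [← h]
  apply intervalIntegral.integral_congr
  intro t _
  simp only []
  rw [mul_comm]

lemma ae_Ioo : ∀ᵐ t ∂(volume.restrict (Set.Ioc (0:ℝ) 1)), t ∈ Set.Ioo (0:ℝ) 1 := by
  rw [← Measure.restrict_congr_set Ioo_ae_eq_Ioc]
  exact ae_restrict_mem measurableSet_Ioo

lemma g_bound {x y t : ℝ} (hx : 1 ≤ x) (hy : 1 ≤ y) (ht : t ∈ Set.Ioo (0:ℝ) 1) :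
    (-Real.log t) ^ (x - 1) * (-Real.log (1 - t)) ^ (y - 1) ≤
      (x ^ (x - 1) * y ^ (y - 1)) * (t ^ (x⁻¹ - 1) * (1 - t) ^ (y⁻¹ - 1)) := by
  obtain ⟨ht0, ht1⟩ := ht
  have h1t : (0:ℝ) < 1 - t := by linarith
  have hx0 : (0:ℝ) < x := by linarith
  have hy0 : (0:ℝ) < y := by linarith
  have hl1 : -Real.log t ≤ x * t ^ (-x⁻¹) := by
    have := log_bound ht0 (inv_pos.mpr hx0); rwa [inv_inv] at this
  have hl2 : -Real.log (1 - t) ≤ y * (1 - t) ^ (-y⁻¹) := by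
    have := log_bound h1t (inv_pos.mpr hy0); rwa [inv_inv] at this
  have hnn1 : (0:ℝ) ≤ -Real.log t := by simpa using Real.log_nonpos ht0.le ht1.le
  have hnn2 : (0:ℝ) ≤ -Real.log (1 - t) := by
    simpa using Real.log_nonpos h1t.le (by linarith)
  have eex : (-x⁻¹) * (x - 1) = x⁻¹ - 1 := by field_simp; ring
  have eey : (-y⁻¹) * (y - 1) = y⁻¹ - 1 := by field_simp; ring
  have e1 : (x * t ^ (-x⁻¹)) ^ (x - 1) = x ^ (x - 1) * t ^ (x⁻¹ - 1) := by
    rw [Real.mul_rpow hx0.le (Real.rpow_nonneg ht0.le _), ← Real.rpow_mul ht0.le, eex]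
  have e2 : (y * (1 - t) ^ (-y⁻¹)) ^ (y - 1) = y ^ (y - 1) * (1 - t) ^ (y⁻¹ - 1) := by
    rw [Real.mul_rpow hy0.le (Real.rpow_nonneg h1t.le _), ← Real.rpow_mul h1t.le, eey]
  have b1 : (-Real.log t) ^ (x - 1) ≤ x ^ (x - 1) * t ^ (x⁻¹ - 1) := by
    rw [← e1]; exact Real.rpow_le_rpow hnn1 hl1 (by linarith)
  have b2 : (-Real.log (1 - t)) ^ (y - 1) ≤ y ^ (y - 1) * (1 - t) ^ (y⁻¹ - 1) := by
    rw [← e2]; exact Real.rpow_le_rpow hnn2 hl2 (by linarith)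
  calc (-Real.log t) ^ (x - 1) * (-Real.log (1 - t)) ^ (y - 1)
      ≤ (x ^ (x - 1) * t ^ (x⁻¹ - 1)) * (y ^ (y - 1) * (1 - t) ^ (y⁻¹ - 1)) :=
        mul_le_mul b1 b2 (Real.rpow_nonneg hnn2 _)
          (mul_nonneg (Real.rpow_nonneg hx0.le _) (Real.rpow_nonneg ht0.le _))
    _ = _ := by ring

lemma g_integrable {x y : ℝ} (hx : 1 ≤ x) (hy : 1 ≤ y) :
    IntervalIntegrable
      (fun t : ℝ => (-Real.log t) ^ (x - 1) * (-Real.log (1 - t)) ^ (y - 1)) volume 0 1 := by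
  have hx0 : (0:ℝ) < x := by linarith
  have hy0 : (0:ℝ) < y := by linarith
  have hbase : IntervalIntegrable
      (fun t : ℝ => (x ^ (x - 1) * y ^ (y - 1)) * (t ^ (x⁻¹ - 1) * (1 - t) ^ (y⁻¹ - 1)))
      volume 0 1 := (beta_int (inv_pos.mpr hx0) (inv_pos.mpr hy0)).const_mul _
  rw [intervalIntegrable_iff_integrableOn_Ioc_of_le (by norm_num)] at hbase ⊢
  refine MeasureTheory.Integrable.mono hbase (Measurable.aestronglyMeasurable
    (by have h : Measurable Real.log := Real.measurable_log; fun_prop)) ?_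
  filter_upwards [ae_Ioo] with t ht
  obtain ⟨ht0, ht1⟩ := ht
  have hnn1 : (0:ℝ) ≤ -Real.log t := by simpa using Real.log_nonpos ht0.le ht1.le
  have hnn2 : (0:ℝ) ≤ -Real.log (1 - t) := by
    simpa using Real.log_nonpos (by linarith) (by linarith)
  rw [Real.norm_eq_abs, Real.norm_eq_abs,
    abs_of_nonneg (mul_nonneg (Real.rpow_nonneg hnn1 _) (Real.rpow_nonneg hnn2 _)),
    abs_of_nonneg (mul_nonneg (mul_nonneg (Real.rpow_nonneg hx0.le _) (Real.rpow_nonneg hy0.le _))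
      (mul_nonneg (Real.rpow_nonneg ht0.le _) (Real.rpow_nonneg (by linarith) _)))]
  exact g_bound hx hy ⟨ht0, ht1⟩

end BiGammaAux

open BiGammaAux MeasureTheory in
theorem biGamma_vs_beta (x y : ℝ) :
    (1 ≤ x → 1 ≤ y → betaReal x y ≤ biGamma x y) ∧
    (0 < x → x ≤ 1 → 0 < y → y ≤ 1 → biGamma x y ≤ betaReal x y) := by
  constructor
  · intro hx hy
    rw [betaReal, betaReal_symm_aux, biGamma, intervalIntegral.integral_of_le zero_le_one,
      intervalIntegral.integral_of_le zero_le_one]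
    apply MeasureTheory.integral_mono_of_nonneg
    · filter_upwards [ae_Ioo] with t ht
      exact mul_nonneg (Real.rpow_nonneg ht.1.le _) (Real.rpow_nonneg (by linarith [ht.2]) _)
    · exact (intervalIntegrable_iff_integrableOn_Ioc_of_le zero_le_one).mp (g_integrable hx hy)
    · filter_upwards [ae_Ioo] with t ht
      obtain ⟨ht0, ht1⟩ := ht
      have h1t : (0:ℝ) < 1 - t := by linarith
      have hL1 : 1 - t ≤ -Real.log t := by
        have := Real.log_le_sub_one_of_pos ht0; linarith
      have hL2 : t ≤ -Real.log (1 - t) := by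
        have := Real.log_le_sub_one_of_pos h1t; linarith
      have hb1 : (1 - t) ^ (x - 1) ≤ (-Real.log t) ^ (x - 1) :=
        Real.rpow_le_rpow h1t.le hL1 (by linarith)
      have hb2 : t ^ (y - 1) ≤ (-Real.log (1 - t)) ^ (y - 1) :=
        Real.rpow_le_rpow ht0.le hL2 (by linarith)
      calc t ^ (y - 1) * (1 - t) ^ (x - 1)
          ≤ (-Real.log (1 - t)) ^ (y - 1) * (-Real.log t) ^ (x - 1) :=
            mul_le_mul hb2 hb1 (Real.rpow_nonneg h1t.le _)
              (Real.rpow_nonneg (le_trans (by linarith) hL2) _)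
        _ = _ := mul_comm _ _
  · intro hx0 hx1 hy0 hy1
    rw [betaReal, betaReal_symm_aux, biGamma, intervalIntegral.integral_of_le zero_le_one,
      intervalIntegral.integral_of_le zero_le_one]
    apply MeasureTheory.integral_mono_of_nonneg
    · filter_upwards [ae_Ioo] with t ht
      obtain ⟨ht0, ht1⟩ := ht
      have hnn1 : (0:ℝ) ≤ -Real.log t := by simpa using Real.log_nonpos ht0.le ht1.le
      have hnn2 : (0:ℝ) ≤ -Real.log (1 - t) := by
        simpa using Real.log_nonpos (by linarith) (by linarith)
      exact mul_nonneg (Real.rpow_nonneg hnn1 _) (Real.rpow_nonneg hnn2 _)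
    · exact (intervalIntegrable_iff_integrableOn_Ioc_of_le zero_le_one).mp (beta_int hy0 hx0)
    · filter_upwards [ae_Ioo] with t ht
      obtain ⟨ht0, ht1⟩ := ht
      have h1t : (0:ℝ) < 1 - t := by linarith
      have hL1 : 1 - t ≤ -Real.log t := by
        have := Real.log_le_sub_one_of_pos ht0; linarith
      have hL2 : t ≤ -Real.log (1 - t) := by
        have := Real.log_le_sub_one_of_pos h1t; linarith
      have hb1 : (-Real.log t) ^ (x - 1) ≤ (1 - t) ^ (x - 1) :=
        Real.rpow_le_rpow_of_nonpos h1t hL1 (by linarith)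
      have hb2 : (-Real.log (1 - t)) ^ (y - 1) ≤ t ^ (y - 1) :=
        Real.rpow_le_rpow_of_nonpos ht0 hL2 (by linarith)
      calc (-Real.log t) ^ (x - 1) * (-Real.log (1 - t)) ^ (y - 1)
          ≤ (1 - t) ^ (x - 1) * t ^ (y - 1) :=
            mul_le_mul hb1 hb2 (Real.rpow_nonneg (le_trans ht0.le hL2) _)
              (Real.rpow_nonneg h1t.le _)
        _ = _ := mul_comm _ _
end

section
/- For any x ∈ (0,1), Γ(x, 1-x) ≤ π / sin(πx). -/
open Real Set intervalIntegral

lemma beta_eqon (x : ℝ) (hx : x ∈ Set.Ioo (0:ℝ) 1) :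
    ∀ t ∈ Set.uIcc (0:ℝ) 1,
      (t : ℂ) ^ (((1 - x : ℝ) : ℂ) - 1) * (1 - (t : ℂ)) ^ ((x : ℂ) - 1)
        = ((t ^ (-x) * (1 - t) ^ (x - 1) : ℝ) : ℂ) := by
  intro t ht
  rw [Set.uIcc_of_le zero_le_one] at ht
  have h1 : (((1 - x : ℝ) : ℂ) - 1) = ((-x : ℝ) : ℂ) := by push_cast; ring
  have h2 : ((x : ℂ) - 1) = ((x - 1 : ℝ) : ℂ) := by push_cast; ring
  have h3 : (1 - (t:ℂ)) = ((1 - t : ℝ) : ℂ) := by push_cast; ring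
  rw [h1, h2, h3, ← Complex.ofReal_cpow ht.1, ← Complex.ofReal_cpow (by linarith [ht.2]),
    ← Complex.ofReal_mul]

lemma beta_integrable (x : ℝ) (hx : x ∈ Set.Ioo (0:ℝ) 1) :
    IntervalIntegrable (fun t : ℝ => t ^ (-x) * (1 - t) ^ (x - 1)) MeasureTheory.volume 0 1 := by
  have h := Complex.betaIntegral_convergent (u := ((1 - x : ℝ) : ℂ)) (v := (x : ℂ))
    (by simp; linarith [hx.2]) (by simpa using hx.1)
  have h2 : IntervalIntegrable
      (fun t : ℝ => ((t ^ (-x) * (1 - t) ^ (x - 1) : ℝ) : ℂ)) MeasureTheory.volume 0 1 := by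
    apply h.congr
    intro t ht
    exact beta_eqon x hx t (Set.uIoc_subset_uIcc ht)
  rw [intervalIntegrable_iff] at h2 ⊢
  have h3 := h2.re
  simp at h3
  rw [Set.uIoc_of_le zero_le_one]
  exact h3

lemma beta_value (x : ℝ) (hx : x ∈ Set.Ioo (0:ℝ) 1) :
    ∫ t in (0:ℝ)..1, t ^ (-x) * (1 - t) ^ (x - 1) = Real.pi / Real.sin (Real.pi * x) := by
  have hB := Complex.Gamma_mul_Gamma_eq_betaIntegral (s := ((1 - x : ℝ) : ℂ)) (t := (x : ℂ))
    (by simp; linarith [hx.2]) (by simpa using hx.1)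
  have hsum : ((1 - x : ℝ) : ℂ) + (x : ℂ) = 1 := by push_cast; ring
  rw [hsum, Complex.Gamma_one, one_mul, Complex.betaIntegral] at hB
  rw [intervalIntegral.integral_congr (beta_eqon x hx), intervalIntegral.integral_ofReal] at hB
  have : ((Real.Gamma (1 - x) * Real.Gamma x : ℝ) : ℂ)
      = ((∫ t in (0:ℝ)..1, t ^ (-x) * (1 - t) ^ (x - 1) : ℝ) : ℂ) := by
    rw [← hB, Complex.ofReal_mul, Complex.Gamma_ofReal, Complex.Gamma_ofReal]
  have := Complex.ofReal_inj.mp this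
  rw [← this, mul_comm, Real.Gamma_mul_Gamma_one_sub]

theorem biGamma_reflection_le (x : ℝ) (hx : x ∈ Set.Ioo (0:ℝ) 1) :
    biGamma x (1 - x) ≤ Real.pi / Real.sin (Real.pi * x) := by
  obtain ⟨hx0, hx1⟩ := hx
  have hsin : 0 < Real.sin (Real.pi * x) :=
    Real.sin_pos_of_pos_of_lt_pi (by positivity) (by nlinarith [Real.pi_pos])
  rw [biGamma]
  by_cases hf : IntervalIntegrable
      (fun t : ℝ => (-Real.log t) ^ (x - 1) * (-Real.log (1 - t)) ^ (1 - x - 1))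
      MeasureTheory.volume 0 1
  · rw [← beta_value x ⟨hx0, hx1⟩]
    apply intervalIntegral.integral_mono_on zero_le_one hf (beta_integrable x ⟨hx0, hx1⟩)
    intro t ht
    rcases eq_or_lt_of_le ht.1 with h0 | h0
    · simp [← h0, Real.zero_rpow (by linarith : -x ≠ 0),
        Real.zero_rpow (by linarith : x - 1 ≠ 0)]
    rcases eq_or_lt_of_le ht.2 with h1 | h1
    · simp [h1, Real.zero_rpow (by linarith : -x ≠ 0),
        Real.zero_rpow (by linarith : x - 1 ≠ 0),
        Real.zero_rpow (by linarith : 1 - x - 1 ≠ 0)]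
    have hlt : 1 - t ≤ -Real.log t := by
      have := Real.log_le_sub_one_of_pos h0; linarith
    have hlt2 : t ≤ -Real.log (1 - t) := by
      have := Real.log_le_sub_one_of_pos (by linarith : (0:ℝ) < 1 - t); linarith
    have e1 : (-Real.log t) ^ (x - 1) ≤ (1 - t) ^ (x - 1) :=
      Real.rpow_le_rpow_of_nonpos (by linarith) hlt (by linarith)
    have e2 : (-Real.log (1 - t)) ^ (1 - x - 1) ≤ t ^ (-x) := by
      have : (1:ℝ) - x - 1 = -x := by ring
      rw [this]
      exact Real.rpow_le_rpow_of_nonpos h0 hlt2 (by linarith)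
    calc (-Real.log t) ^ (x - 1) * (-Real.log (1 - t)) ^ (1 - x - 1)
        ≤ (1 - t) ^ (x - 1) * (t ^ (-x)) := by
          apply mul_le_mul e1 e2 (Real.rpow_nonneg (by linarith) _)
            (Real.rpow_nonneg (by linarith) _)
      _ = t ^ (-x) * (1 - t) ^ (x - 1) := by ring
  · rw [intervalIntegral.integral_undef hf]
    positivity
end

section
/- The Bigamma function is logarithmically convex on (0,∞)×(0,∞): for p,q ≥ 0 with p+q=1 and x,y,a,b > 0, Γ(px+qa, py+qb) ≤ Γ(x,y)^p Γ(a,b)^q. -/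
open Real Set intervalIntegral

open MeasureTheory


lemma biGamma_meas (x y : ℝ) :
    Measurable (fun t : ℝ => (-Real.log t) ^ (x-1) * (-Real.log (1 - t)) ^ (y-1)) := by
  apply Measurable.mul
  · exact Real.measurable_log.neg.pow measurable_const
  · exact (Real.measurable_log.comp (measurable_const.sub measurable_id)).neg.pow measurable_const

lemma biGamma_integrable_half (x y : ℝ) (hx : 0 < x) (hy : 0 < y) :
    IntegrableOn (fun t : ℝ => (-Real.log t) ^ (x-1) * (-Real.log (1 - t)) ^ (y-1))
      (Ioc (0:ℝ) (1/2)) := by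
  set K1 : ℝ := max 1 ((2:ℝ) ^ (y-1)) with hK1
  set K2 : ℝ := max ((Real.log 2) ^ (x-1)) ((2*(x-1)/y) ^ (x-1)) with hK2
  have hK1nn : 0 ≤ K1 := le_trans zero_le_one (le_max_left _ _)
  have hK2nn : 0 ≤ K2 := le_trans (Real.rpow_nonneg (Real.log_nonneg (by norm_num)) _)
    (le_max_left _ _)
  have hbase : IntegrableOn (fun t : ℝ => t ^ (y/2 - 1)) (Ioc (0:ℝ) (1/2)) := by
    rw [← intervalIntegrable_iff_integrableOn_Ioc_of_le (by norm_num)]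
    exact intervalIntegral.intervalIntegrable_rpow' (by linarith)
  have hbound : IntegrableOn (fun t : ℝ => K1 * K2 * t ^ (y/2 - 1)) (Ioc (0:ℝ) (1/2)) :=
    hbase.const_mul _
  refine Integrable.mono' hbound ((biGamma_meas x y).aestronglyMeasurable) ?_
  rw [ae_restrict_iff' measurableSet_Ioc]
  refine ae_of_all _ (fun t ht => ?_)
  obtain ⟨ht0, ht2⟩ := ht
  have ht1 : t < 1 := lt_of_le_of_lt ht2 (by norm_num)
  have h1t : (0:ℝ) < 1 - t := by linarith
  have hA : 0 < -Real.log t := by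
    have := Real.log_neg ht0 ht1; linarith
  have hB : 0 < -Real.log (1 - t) := by
    have := Real.log_neg (x := 1 - t) (by linarith) (by linarith); linarith
  have hBt : t ≤ -Real.log (1 - t) := by
    have := Real.log_le_sub_one_of_pos (x := 1 - t) h1t
    linarith
  have hB2t : -Real.log (1 - t) ≤ 2 * t := by
    have h2 : -Real.log (1 - t) ≤ (1-t)⁻¹ - 1 := by
      rw [← Real.log_inv]
      exact Real.log_le_sub_one_of_pos (by positivity)
    have hinv : (1-t)⁻¹ * (1-t) = 1 := inv_mul_cancel₀ h1t.ne'
    nlinarith [h2, hinv, h1t, ht2, ht0]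
  have hBy : (-Real.log (1 - t)) ^ (y-1) ≤ K1 * t ^ (y-1) := by
    rcases le_or_gt 0 (y-1) with h | h
    · calc (-Real.log (1 - t)) ^ (y-1) ≤ (2*t) ^ (y-1) :=
            Real.rpow_le_rpow hB.le hB2t h
        _ = (2:ℝ)^(y-1) * t^(y-1) := Real.mul_rpow (by norm_num) ht0.le
        _ ≤ K1 * t^(y-1) :=
            mul_le_mul_of_nonneg_right (le_max_right _ _) (Real.rpow_nonneg ht0.le _)
    · calc (-Real.log (1 - t)) ^ (y-1) ≤ t ^ (y-1) :=
            Real.rpow_le_rpow_of_nonpos ht0 hBt h.le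
        _ ≤ K1 * t^(y-1) := by
            nlinarith [Real.rpow_nonneg ht0.le (y-1), (le_max_left 1 ((2:ℝ)^(y-1)) : (1:ℝ) ≤ K1)]
  have htinv : 1 ≤ t ^ (-(y/2)) :=
    Real.one_le_rpow_of_pos_of_le_one_of_nonpos ht0 ht1.le (by linarith)
  have hAx : (-Real.log t) ^ (x-1) ≤ K2 * t ^ (-(y/2)) := by
    rcases le_or_gt (x-1) 0 with h | h
    · have hlog2 : Real.log 2 ≤ -Real.log t := by
        have : Real.log t ≤ Real.log (1/2) := Real.log_le_log ht0 ht2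
        rw [Real.log_div one_ne_zero (by norm_num), Real.log_one] at this
        linarith
      calc (-Real.log t) ^ (x-1) ≤ (Real.log 2) ^ (x-1) :=
            Real.rpow_le_rpow_of_nonpos (Real.log_pos (by norm_num)) hlog2 h
        _ ≤ K2 := le_max_left _ _
        _ ≤ K2 * t ^ (-(y/2)) := le_mul_of_one_le_right hK2nn htinv
    · set ε : ℝ := y / (2*(x-1)) with hε
      have hx1 : x - 1 ≠ 0 := ne_of_gt h
      have hεpos : 0 < ε := by positivity
      have hkey : -Real.log t ≤ ε⁻¹ * t ^ (-ε) := by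
        have h1 : -Real.log t = ε⁻¹ * Real.log ((t⁻¹) ^ ε) := by
          rw [Real.log_rpow (by positivity), Real.log_inv]
          field_simp
        have h2 : Real.log ((t⁻¹) ^ ε) ≤ (t⁻¹) ^ ε := by
          have := Real.log_le_sub_one_of_pos (x := (t⁻¹)^ε) (by positivity)
          linarith
        have h3 : (t⁻¹ : ℝ) ^ ε = t ^ (-ε) := by
          rw [Real.inv_rpow ht0.le, ← Real.rpow_neg ht0.le]
        calc -Real.log t = ε⁻¹ * Real.log ((t⁻¹) ^ ε) := h1
          _ ≤ ε⁻¹ * (t⁻¹) ^ ε := mul_le_mul_of_nonneg_left h2 (by positivity)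
          _ = ε⁻¹ * t ^ (-ε) := by rw [h3]
      calc (-Real.log t) ^ (x-1) ≤ (ε⁻¹ * t ^ (-ε)) ^ (x-1) :=
            Real.rpow_le_rpow hA.le hkey h.le
        _ = (ε⁻¹)^(x-1) * (t ^ (-ε))^(x-1) := Real.mul_rpow (by positivity) (by positivity)
        _ = (ε⁻¹)^(x-1) * t ^ (-(y/2)) := by
            have hεval : -ε * (x-1) = -(y/2) := by
              rw [hε]; field_simp
            rw [← Real.rpow_mul ht0.le, hεval]
        _ ≤ K2 * t ^ (-(y/2)) := by
            apply mul_le_mul_of_nonneg_right _ (Real.rpow_nonneg ht0.le _)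
            have h4 : ε⁻¹ = 2*(x-1)/y := by rw [hε]; field_simp
            rw [h4]
            exact le_max_right _ _
  have hnn : 0 ≤ (-Real.log t) ^ (x-1) * (-Real.log (1 - t)) ^ (y-1) := by positivity
  rw [Real.norm_of_nonneg hnn]
  calc (-Real.log t) ^ (x-1) * (-Real.log (1 - t)) ^ (y-1)
      ≤ (K2 * t ^ (-(y/2))) * (K1 * t ^ (y-1)) :=
        mul_le_mul hAx hBy (by positivity) (by positivity)
    _ = K1 * K2 * (t ^ (-(y/2)) * t ^ (y-1)) := by ring
    _ = K1 * K2 * t ^ (y/2 - 1) := by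
        have hexp : -(y/2) + (y-1) = y/2 - 1 := by ring
        rw [← Real.rpow_add ht0, hexp]

lemma biGamma_integrableOn (x y : ℝ) (hx : 0 < x) (hy : 0 < y) :
    IntegrableOn (fun t : ℝ => (-Real.log t) ^ (x-1) * (-Real.log (1 - t)) ^ (y-1))
      (Ioc (0:ℝ) 1) := by
  rw [← intervalIntegrable_iff_integrableOn_Ioc_of_le zero_le_one]
  have h1 : IntervalIntegrable
      (fun t : ℝ => (-Real.log t) ^ (x-1) * (-Real.log (1 - t)) ^ (y-1)) volume 0 (1/2) := by
    rw [intervalIntegrable_iff_integrableOn_Ioc_of_le (by norm_num)]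
    exact biGamma_integrable_half x y hx hy
  have h2 : IntervalIntegrable
      (fun t : ℝ => (-Real.log t) ^ (y-1) * (-Real.log (1 - t)) ^ (x-1)) volume 0 (1/2) := by
    rw [intervalIntegrable_iff_integrableOn_Ioc_of_le (by norm_num)]
    exact biGamma_integrable_half y x hy hx
  have h3 := h2.comp_sub_left 1
  have h5 : (fun t : ℝ => (-Real.log (1 - t))^(y-1) * (-Real.log (1-(1-t)))^(x-1))
      = (fun t : ℝ => (-Real.log t)^(x-1) * (-Real.log (1-t))^(y-1)) := by
    funext t; rw [sub_sub_cancel]; ring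
  rw [h5] at h3
  norm_num at h3
  exact h1.trans h3.symm

lemma biGamma_nnOn (u v : ℝ) : ∀ t ∈ Ioc (0:ℝ) 1,
    0 ≤ (-Real.log t) ^ (u-1) * (-Real.log (1-t)) ^ (v-1) := by
  intro t ht
  have h1 : (0:ℝ) ≤ -Real.log t := by
    have := Real.log_nonpos ht.1.le ht.2; linarith
  have h2 : (0:ℝ) ≤ -Real.log (1-t) := by
    have := Real.log_nonpos (x := 1 - t) (by linarith [ht.2]) (by linarith [ht.1]); linarith
  positivity

lemma biGamma_eq_setIntegral (x y : ℝ) :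
    biGamma x y = ∫ t in Ioc (0:ℝ) 1,
      (-Real.log t) ^ (x - 1) * (-Real.log (1 - t)) ^ (y - 1) := by
  rw [biGamma, intervalIntegral.integral_of_le zero_le_one]

lemma biGamma_nonneg (x y : ℝ) : 0 ≤ biGamma x y := by
  rw [biGamma_eq_setIntegral]
  exact setIntegral_nonneg measurableSet_Ioc (biGamma_nnOn x y)

theorem biGamma_log_convex (p q x y a b : ℝ) (hp : 0 ≤ p) (hq : 0 ≤ q)
    (hpq : p + q = 1) (hx : 0 < x) (hy : 0 < y) (ha : 0 < a) (hb : 0 < b) :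
    biGamma (p * x + q * a) (p * y + q * b)
      ≤ biGamma x y ^ p * biGamma a b ^ q := by
  rcases eq_or_lt_of_le hp with hp0 | hp
  · have hq1 : q = 1 := by linarith
    simp [← hp0, hq1]
  rcases eq_or_lt_of_le hq with hq0 | hq
  · have hp1 : p = 1 := by linarith
    simp [← hq0, hp1]
  have hp1 : p < 1 := by linarith
  have hq1 : q < 1 := by linarith
  set f := fun t : ℝ => (-Real.log t) ^ (x - 1) * (-Real.log (1 - t)) ^ (y - 1) with hfdef
  set g := fun t : ℝ => (-Real.log t) ^ (a - 1) * (-Real.log (1 - t)) ^ (b - 1) with hgdef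
  set h := fun t : ℝ => (-Real.log t) ^ (p*x + q*a - 1) * (-Real.log (1 - t)) ^ (p*y + q*b - 1)
    with hhdef
  set μ := volume.restrict (Ioc (0:ℝ) 1) with hμ
  have hf_int : Integrable f μ := biGamma_integrableOn x y hx hy
  have hg_int : Integrable g μ := biGamma_integrableOn a b ha hb
  have hh_int : Integrable h μ := biGamma_integrableOn _ _ (by positivity) (by positivity)
  have hmem : ∀ᵐ t ∂μ, t ∈ Ioc (0:ℝ) 1 := ae_restrict_mem measurableSet_Ioc
  have hf_nn : 0 ≤ᵐ[μ] f := hmem.mono fun t ht => biGamma_nnOn x y t ht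
  have hg_nn : 0 ≤ᵐ[μ] g := hmem.mono fun t ht => biGamma_nnOn a b t ht
  have hh_nn : 0 ≤ᵐ[μ] h := hmem.mono fun t ht => biGamma_nnOn _ _ t ht
  have h_ne : ∀ᵐ t ∂μ, t ≠ 1 := by
    rw [hμ]
    refine ae_restrict_of_ae ?_
    rw [ae_iff]
    have : {t : ℝ | ¬ t ≠ 1} = {1} := by ext t; simp
    rw [this]
    exact Real.volume_singleton
  -- pointwise identity
  have key : ∀ᵐ t ∂μ, ENNReal.ofReal (h t)
      = ENNReal.ofReal (f t) ^ p * ENNReal.ofReal (g t) ^ q := by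
    filter_upwards [hmem, h_ne] with t ht htne
    have ht1 : t < 1 := lt_of_le_of_ne ht.2 htne
    have hA : 0 < -Real.log t := by
      have := Real.log_neg ht.1 ht1; linarith
    have hB : 0 < -Real.log (1 - t) := by
      have := Real.log_neg (x := 1 - t) (by linarith) (by linarith [ht.1]); linarith
    set A := -Real.log t
    set B := -Real.log (1 - t)
    have e1 : p*x + q*a - 1 = (x-1)*p + (a-1)*q := by linear_combination hpq
    have e2 : p*y + q*b - 1 = (y-1)*p + (b-1)*q := by linear_combination hpq
    have hreal : h t = f t ^ p * g t ^ q := by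
      show A ^ (p*x + q*a - 1) * B ^ (p*y + q*b - 1)
        = (A ^ (x-1) * B ^ (y-1)) ^ p * (A ^ (a-1) * B ^ (b-1)) ^ q
      rw [e1, e2, Real.rpow_add hA, Real.rpow_add hB,
        Real.rpow_mul hA.le, Real.rpow_mul hA.le, Real.rpow_mul hB.le, Real.rpow_mul hB.le,
        Real.mul_rpow (Real.rpow_nonneg hA.le _) (Real.rpow_nonneg hB.le _),
        Real.mul_rpow (Real.rpow_nonneg hA.le _) (Real.rpow_nonneg hB.le _)]
      ring
    have hft : 0 ≤ f t := biGamma_nnOn x y t ht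
    have hgt : 0 ≤ g t := biGamma_nnOn a b t ht
    rw [hreal, ENNReal.ofReal_mul (Real.rpow_nonneg hft p),
      ENNReal.ofReal_rpow_of_nonneg hft hp.le, ENNReal.ofReal_rpow_of_nonneg hgt hq.le]
  -- conjugate exponents
  have hPQ : Real.HolderConjugate (1/p) (1/q) := by
    rw [Real.holderConjugate_iff]
    constructor
    · rw [lt_div_iff₀ hp, one_mul]; exact hp1
    · rw [one_div, one_div, inv_inv, inv_inv]; exact hpq
  have hF_meas : AEMeasurable (fun t => ENNReal.ofReal (f t) ^ p) μ :=
    (((biGamma_meas x y).ennreal_ofReal).pow measurable_const).aemeasurable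
  have hG_meas : AEMeasurable (fun t => ENNReal.ofReal (g t) ^ q) μ :=
    (((biGamma_meas a b).ennreal_ofReal).pow measurable_const).aemeasurable
  have holder := ENNReal.lintegral_mul_le_Lp_mul_Lq μ hPQ hF_meas hG_meas
  simp only [Pi.mul_apply] at holder
  have e3 : ∀ t : ℝ, (ENNReal.ofReal (f t) ^ p) ^ ((1:ℝ)/p) = ENNReal.ofReal (f t) := by
    intro t; rw [← ENNReal.rpow_mul, mul_one_div_cancel hp.ne', ENNReal.rpow_one]
  have e4 : ∀ t : ℝ, (ENNReal.ofReal (g t) ^ q) ^ ((1:ℝ)/q) = ENNReal.ofReal (g t) := by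
    intro t; rw [← ENNReal.rpow_mul, mul_one_div_cancel hq.ne', ENNReal.rpow_one]
  simp only [e3, e4, one_div_one_div] at holder
  have hFint : ∫⁻ t, ENNReal.ofReal (f t) ∂μ = ENNReal.ofReal (biGamma x y) := by
    rw [biGamma_eq_setIntegral, ofReal_integral_eq_lintegral_ofReal hf_int hf_nn]
  have hGint : ∫⁻ t, ENNReal.ofReal (g t) ∂μ = ENNReal.ofReal (biGamma a b) := by
    rw [biGamma_eq_setIntegral, ofReal_integral_eq_lintegral_ofReal hg_int hg_nn]
  have main : ENNReal.ofReal (biGamma (p*x + q*a) (p*y + q*b))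
      ≤ ENNReal.ofReal (biGamma x y ^ p * biGamma a b ^ q) := by
    calc ENNReal.ofReal (biGamma (p*x + q*a) (p*y + q*b))
        = ∫⁻ t, ENNReal.ofReal (h t) ∂μ := by
          rw [biGamma_eq_setIntegral]
          exact ofReal_integral_eq_lintegral_ofReal hh_int hh_nn
      _ = ∫⁻ t, ENNReal.ofReal (f t) ^ p * ENNReal.ofReal (g t) ^ q ∂μ :=
          lintegral_congr_ae key
      _ ≤ (∫⁻ t, ENNReal.ofReal (f t) ∂μ) ^ p * (∫⁻ t, ENNReal.ofReal (g t) ∂μ) ^ q := holder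
      _ = ENNReal.ofReal (biGamma x y) ^ p * ENNReal.ofReal (biGamma a b) ^ q := by
          rw [hFint, hGint]
      _ = ENNReal.ofReal (biGamma x y ^ p * biGamma a b ^ q) := by
          rw [ENNReal.ofReal_mul (Real.rpow_nonneg (biGamma_nonneg x y) p),
            ENNReal.ofReal_rpow_of_nonneg (biGamma_nonneg x y) hp.le,
            ENNReal.ofReal_rpow_of_nonneg (biGamma_nonneg a b) hq.le]
  exact (ENNReal.ofReal_le_ofReal_iff
    (mul_nonneg (Real.rpow_nonneg (biGamma_nonneg x y) p)
      (Real.rpow_nonneg (biGamma_nonneg a b) q))).mp main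
end
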